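/- The family of all trees T over ω such that M(B) ⊆ T for some infinite B ⊆ ω, regarded as a subset of the Polish space Tree_ω, is Σ¹₁-complete: it is analytic, and for every Polish space Y and every analytic set B ⊆ Y there is a Borel measurable function f : Y → Tree_ω whose preimage of this family equals B. -/

import Mathlib

open MeasureTheory

/-- The Polish space `Tree_ω` of all trees over `ω` (subsets of `ω^{<ω}` closed under
initial segments), as a subspace of the Cantor space `2^{ω^{<ω}} ≅ P(ω^{<ω})`. -/
abbrev TreeOmega : Type :=
  {x : List ℕ → Bool // ∀ σ τ : List ℕ, x σ = true → τ <+: σ → x τ = true}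

/-- `M(B)`: the set of strictly increasing finite sequences with entries in `B`. -/
def MB (B : Set ℕ) : Set (List ℕ) :=
  {σ | (∀ n ∈ σ, n ∈ B) ∧ σ.Pairwise (· < ·)}

/-- The family of all trees `T` over `ω` with `M(B) ⊆ T` for some infinite `B ⊆ ω`. -/
def mathiasBushFam : Set TreeOmega :=
  {T | ∃ B : Set ℕ, B.Infinite ∧ MB B ⊆ {σ | T.1 σ = true}}

/-! ### Instances on `TreeOmega` -/

lemma isClosed_treeSet :
    IsClosed {x : List ℕ → Bool | ∀ σ τ : List ℕ, x σ = true → τ <+: σ → x τ = true} := by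
  have : {x : List ℕ → Bool | ∀ σ τ : List ℕ, x σ = true → τ <+: σ → x τ = true} =
      ⋂ (σ : List ℕ), ⋂ (τ : List ℕ), ⋂ (_ : τ <+: σ),
        (((fun x : List ℕ → Bool => x σ) ⁻¹' {true})ᶜ ∪ (fun x : List ℕ → Bool => x τ) ⁻¹' {true}) := by
    ext x
    simp only [Set.mem_iInter, Set.mem_setOf_eq, Set.mem_union, Set.mem_compl_iff,
      Set.mem_preimage, Set.mem_singleton_iff]
    constructor
    · intro h σ τ hpre
      by_cases hσ : x σ = true
      · exact Or.inr (h σ τ hσ hpre)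
      · exact Or.inl hσ
    · intro h σ τ hσ hpre
      exact ((h σ τ hpre).resolve_left (by simp [hσ]))
  rw [this]
  refine isClosed_iInter fun σ => isClosed_iInter fun τ => isClosed_iInter fun _ => ?_
  exact (((isOpen_discrete _).preimage (continuous_apply σ)).isClosed_compl).union
    ((isClosed_discrete _).preimage (continuous_apply τ))

instance : PolishSpace TreeOmega := by
  haveI : PolishSpace (List ℕ → Bool) := instPolishSpaceOfSeparableSpaceOfIsCompletelyMetrizableSpace
  exact isClosed_treeSet.polishSpace

instance : BorelSpace TreeOmega :=
  Subtype.borelSpace {x : List ℕ → Bool | ∀ σ τ : List ℕ, x σ = true → τ <+: σ → x τ = true}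

/-! ### Cylinders and segments in Baire space -/

/-- The basic clopen cylinder of a finite sequence. -/
def cyl (τ : List ℕ) : Set (ℕ → ℕ) := {x | ∀ i < τ.length, x i = τ.getD i 0}

/-- The initial segment of length `n` of `x : ℕ → ℕ`, as a list. -/
def seg (x : ℕ → ℕ) (n : ℕ) : List ℕ := List.ofFn fun i : Fin n => x i

@[simp] lemma seg_length (x : ℕ → ℕ) (n : ℕ) : (seg x n).length = n := by simp [seg]

lemma seg_getD {x : ℕ → ℕ} {n i : ℕ} (h : i < n) : (seg x n).getD i 0 = x i := by
  rw [List.getD_eq_getElem _ _ (by simpa using h)]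
  simp [seg]

lemma mem_cyl_seg (x : ℕ → ℕ) (n : ℕ) : x ∈ cyl (seg x n) := by
  intro i hi
  rw [seg_getD (by simpa using hi)]

lemma getD_of_prefix {τ σ : List ℕ} (h : τ <+: σ) {i : ℕ} (hi : i < τ.length) :
    σ.getD i 0 = τ.getD i 0 := by
  obtain ⟨t, rfl⟩ := h
  rw [List.getD_eq_getElem _ _ hi, List.getD_eq_getElem _ _ (by simp; omega)]
  exact List.getElem_append_left hi

lemma cyl_anti {τ σ : List ℕ} (h : τ <+: σ) : cyl σ ⊆ cyl τ := by
  intro x hx i hi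
  rw [hx i (lt_of_lt_of_le hi h.length_le), getD_of_prefix h hi]

lemma seg_prefix (x : ℕ → ℕ) {m n : ℕ} (h : m ≤ n) : seg x m <+: seg x n := by
  refine List.prefix_iff_eq_take.2 ?_
  apply List.ext_getElem (by simp [h])
  intro i h1 h2
  simp only [seg] at *
  rw [List.getElem_take, List.getElem_ofFn, List.getElem_ofFn]

lemma seg_of_getD {τ : List ℕ} {n : ℕ} (h : τ.length = n) :
    seg (fun i => τ.getD i 0) n = τ := by
  apply List.ext_getElem (by simp [h])
  intro i h1 h2
  simp only [seg, List.getElem_ofFn]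
  rw [List.getD_eq_getElem _ _ h2]

/-- Every neighborhood of `h` in Baire space contains a cylinder around `h`. -/
lemma exists_cyl_subset {h : ℕ → ℕ} {U : Set (ℕ → ℕ)} (hU : U ∈ nhds h) :
    ∃ n, cyl (seg h n) ⊆ U := by
  rw [nhds_pi, Filter.mem_pi] at hU
  obtain ⟨I, hI, t, ht, hsub⟩ := hU
  obtain ⟨m, hm⟩ := hI.bddAbove
  refine ⟨m + 1, fun x hx => hsub fun i hi => ?_⟩
  have hxi : x i = h i := by
    have := hx i (by simpa using Nat.lt_succ_of_le (hm hi))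
    rwa [seg_getD (Nat.lt_succ_of_le (hm hi))] at this
  rw [hxi]
  exact mem_of_mem_nhds (ht i)

/-- If `y` lies in the closure of the images of all the cylinders around a branch `h`,
then `y = g h`. -/
lemma eq_of_mem_closure_cyl {Y : Type*} [TopologicalSpace Y] [T2Space Y]
    {g : (ℕ → ℕ) → Y} (hg : Continuous g) {h : ℕ → ℕ} {y : Y}
    (hy : ∀ n, y ∈ closure (g '' cyl (seg h n))) : y = g h := by
  by_contra hne
  obtain ⟨U, V, hU, hV, hyU, hgV, hdisj⟩ := t2_separation hne
  have hmem : g ⁻¹' V ∈ nhds h := hg.continuousAt.preimage_mem_nhds (hV.mem_nhds hgV)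
  obtain ⟨n, hn⟩ := exists_cyl_subset hmem
  have h1 := (mem_closure_iff.1 (hy n)) U hU hyU
  obtain ⟨z, hzU, ⟨x, hx, rfl⟩⟩ := h1
  exact Set.disjoint_left.1 hdisj hzU (hn hx)

/-! ### The reduction tree -/

variable {Y : Type} [TopologicalSpace Y]

/-- The predicate describing membership in the reduction tree. -/
def goodSeq (g : (ℕ → ℕ) → Y) (y : Y) (σ : List ℕ) : Prop :=
  σ.Pairwise (· < ·) ∧ ∃ τ : List ℕ, τ.length = σ.length ∧
    (∀ i < σ.length, τ.getD i 0 ≤ σ.getD i 0) ∧ y ∈ closure (g '' cyl τ)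

lemma goodSeq_of_prefix {g : (ℕ → ℕ) → Y} {y : Y} {σ σ' : List ℕ}
    (h : goodSeq g y σ) (hpre : σ' <+: σ) : goodSeq g y σ' := by
  obtain ⟨hs, τ, hlen, hbd, hcl⟩ := h
  refine ⟨hs.sublist hpre.sublist, τ.take σ'.length, ?_, ?_, ?_⟩
  · rw [List.length_take, hlen]
    exact min_eq_left hpre.length_le
  · intro i hi
    rw [← getD_of_prefix (List.take_prefix σ'.length τ)
        (by rw [List.length_take, hlen]; exact lt_min hi (lt_of_lt_of_le hi hpre.length_le)),
      ← getD_of_prefix hpre hi]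
    exact hbd i (lt_of_lt_of_le hi hpre.length_le)
  · exact closure_mono (Set.image_mono (cyl_anti (List.take_prefix _ _))) hcl

/-- The reduction map `y ↦ T_y`. -/
noncomputable def redTree (g : (ℕ → ℕ) → Y) (y : Y) : TreeOmega :=
  ⟨fun σ => @decide (goodSeq g y σ) (Classical.propDecidable _), by
    intro σ τ hσ hpre
    exact @decide_eq_true _ (Classical.propDecidable _)
      (goodSeq_of_prefix (@of_decide_eq_true _ (Classical.propDecidable _) hσ) hpre)⟩

lemma redTree_mem {g : (ℕ → ℕ) → Y} {y : Y} {σ : List ℕ} :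
    (redTree g y).1 σ = true ↔ goodSeq g y σ := by
  constructor
  · exact fun h => @of_decide_eq_true _ (Classical.propDecidable _) h
  · exact fun h => @decide_eq_true _ (Classical.propDecidable _) h

/-- If `σ` is strictly increasing with entries in the range of a strictly monotone `b`,
then `b i ≤ σ i`. -/
lemma strictMono_le_of_mem {b : ℕ → ℕ} (hb : StrictMono b) {σ : List ℕ}
    (hs : σ.Pairwise (· < ·)) (hmem : ∀ n ∈ σ, n ∈ Set.range b) :
    ∀ i < σ.length, b i ≤ σ.getD i 0 := by
  intro i
  induction i with
  | zero =>
    intro hi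
    obtain ⟨k, hk⟩ := hmem (σ.getD 0 0) (by rw [List.getD_eq_getElem _ _ hi]; exact List.getElem_mem _)
    rw [← hk]
    exact hb.monotone (Nat.zero_le k)
  | succ i ih =>
    intro hi
    have h1 : b i ≤ σ.getD i 0 := ih (by omega)
    have h2 : σ.getD i 0 < σ.getD (i + 1) 0 := by
      rw [List.getD_eq_getElem _ _ hi, List.getD_eq_getElem _ _ (by omega)]
      exact (List.pairwise_iff_getElem.1 hs) i (i+1) (by omega) hi (by omega)
    obtain ⟨k, hk⟩ := hmem (σ.getD (i+1) 0)
      (by rw [List.getD_eq_getElem _ _ hi]; exact List.getElem_mem _)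
    have : b i < b k := by omega
    have hik : i + 1 ≤ k := hb.lt_iff_lt.1 this
    calc b (i + 1) ≤ b k := hb.monotone hik
      _ = σ.getD (i+1) 0 := hk

lemma seg_mem_MB {b : ℕ → ℕ} (hb : StrictMono b) (n : ℕ) :
    seg b n ∈ MB (Set.range b) := by
  constructor
  · intro m hm
    obtain ⟨i, rfl⟩ := List.mem_ofFn.1 hm
    exact ⟨i, rfl⟩
  · exact List.pairwise_ofFn.2 fun i j hij => hb hij

/-- The key correctness statement: `T_y` belongs to the family iff `y ∈ range g`. -/
lemma redTree_spec [T2Space Y] {g : (ℕ → ℕ) → Y} (hg : Continuous g) (y : Y) :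
    redTree g y ∈ mathiasBushFam ↔ y ∈ Set.range g := by
  constructor
  · rintro ⟨B, hBinf, hBsub⟩
    set b : ℕ → ℕ := Nat.nth (· ∈ B) with hbdef
    have hb : StrictMono b := Nat.nth_strictMono hBinf
    have hbB : ∀ n, b n ∈ B := Nat.nth_mem_of_infinite hBinf
    -- each initial segment of b is in the tree; extract bounded witnesses
    have hwit : ∀ n, ∃ τ : List ℕ, τ.length = n ∧ (∀ i < n, τ.getD i 0 ≤ b i) ∧
        y ∈ closure (g '' cyl τ) := by
      intro n
      have hmb : seg b n ∈ MB B := by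
        obtain ⟨h1, h2⟩ := seg_mem_MB hb n
        exact ⟨fun m hm => by obtain ⟨i, rfl⟩ := h1 m hm; exact hbB i, h2⟩
      have := redTree_mem.1 (hBsub hmb)
      obtain ⟨_, τ, hlen, hbd, hcl⟩ := this
      rw [seg_length] at hlen
      refine ⟨τ, hlen, fun i hi => ?_, hcl⟩
      have := hbd i (by simpa using hi)
      rwa [seg_getD hi] at this
    -- compactness argument
    set C : ℕ → Set (ℕ → ℕ) := fun n =>
      {x | (∀ i, x i ≤ b i) ∧ y ∈ closure (g '' cyl (seg x n))} with hC
    have hKcomp : IsCompact {x : ℕ → ℕ | ∀ i, x i ≤ b i} := by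
      have : {x : ℕ → ℕ | ∀ i, x i ≤ b i} = Set.univ.pi fun i => Set.Iic (b i) := by
        ext x; simp [Set.mem_pi, Pi.le_def]
      rw [this]
      exact isCompact_univ_pi fun i => (Set.finite_Iic (b i)).isCompact
    have hclosed : ∀ n, IsClosed (C n) := by
      intro n
      have h1 : IsClosed {x : ℕ → ℕ | ∀ i, x i ≤ b i} := by
        have : {x : ℕ → ℕ | ∀ i, x i ≤ b i} = ⋂ i, (fun x : ℕ → ℕ => x i) ⁻¹' Set.Iic (b i) := by
          ext x; simp
        rw [this]
        exact isClosed_iInter fun i => (isClosed_discrete _).preimage (continuous_apply i)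
      have h2 : IsClosed {x : ℕ → ℕ | y ∈ closure (g '' cyl (seg x n))} := by
        have : {x : ℕ → ℕ | y ∈ closure (g '' cyl (seg x n))} =
            (fun x : ℕ → ℕ => fun i : Fin n => x i) ⁻¹'
              {v : Fin n → ℕ | y ∈ closure (g '' cyl (List.ofFn v))} := by
          ext x; rfl
        rw [this]
        exact (isClosed_discrete _).preimage (continuous_pi fun i : Fin n => continuous_apply (i : ℕ))
      exact h1.inter h2
    have hne : ∀ n, (C n).Nonempty := by
      intro n
      obtain ⟨τ, hlen, hbd, hcl⟩ := hwit n
      refine ⟨fun i => τ.getD i 0, fun i => ?_, ?_⟩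
      · show τ.getD i 0 ≤ b i
        by_cases hi : i < n
        · exact hbd i hi
        · rw [List.getD_eq_default _ _ (by omega)]; exact Nat.zero_le _
      · show y ∈ closure (g '' cyl (seg (fun i => τ.getD i 0) n))
        rw [seg_of_getD hlen]; exact hcl
    have hdec : ∀ n, C (n + 1) ⊆ C n := by
      intro n x hx
      exact ⟨hx.1, closure_mono (Set.image_mono (cyl_anti (seg_prefix x (Nat.le_succ n)))) hx.2⟩
    have hnonempty : (⋂ n, C n).Nonempty := by
      refine IsCompact.nonempty_iInter_of_sequence_nonempty_isCompact_isClosed C hdec hne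
        ?_ hclosed
      exact hKcomp.of_isClosed_subset (hclosed 0) fun x hx => hx.1
    obtain ⟨h, hh⟩ := hnonempty
    have : y = g h := eq_of_mem_closure_cyl hg fun n => (Set.mem_iInter.1 hh n).2
    exact ⟨h, this.symm⟩
  · rintro ⟨x, rfl⟩
    -- build the dominating set B
    set b : ℕ → ℕ := fun k => (Finset.range (k + 1)).sup x + k with hbdef
    have hb : StrictMono b := by
      intro i j hij
      have h1 : (Finset.range (i + 1)).sup x ≤ (Finset.range (j + 1)).sup x :=
        Finset.sup_mono (Finset.range_subset_range.2 (by omega))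
      show (Finset.range (i + 1)).sup x + i < (Finset.range (j + 1)).sup x + j
      omega
    have hxb : ∀ k, x k ≤ b k := fun k =>
      le_trans (Finset.le_sup (Finset.self_mem_range_succ k)) (Nat.le_add_right _ _)
    refine ⟨Set.range b, Set.infinite_range_of_injective hb.injective, ?_⟩
    rintro σ ⟨hmem, hs⟩
    refine redTree_mem.2 ⟨hs, seg x σ.length, by simp, fun i hi => ?_, ?_⟩
    · rw [seg_getD hi]
      exact le_trans (hxb i) (strictMono_le_of_mem hb hs hmem i hi)
    · exact subset_closure ⟨x, mem_cyl_seg x σ.length, rfl⟩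

/-! ### Measurability of the reduction -/

lemma measurable_redTree [MeasurableSpace Y] [OpensMeasurableSpace Y]
    (g : (ℕ → ℕ) → Y) : Measurable (redTree g) := by
  refine Measurable.subtype_mk ?_
  rw [measurable_pi_iff]
  intro σ
  have hset : MeasurableSet {y : Y | goodSeq g y σ} := by
    have : {y : Y | goodSeq g y σ} = ⋃ τ : List ℕ,
        ⋃ (_ : σ.Pairwise (· < ·) ∧ τ.length = σ.length ∧
          ∀ i < σ.length, τ.getD i 0 ≤ σ.getD i 0), closure (g '' cyl τ) := by
      ext y
      simp only [Set.mem_iUnion, Set.mem_setOf_eq, goodSeq]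
      constructor
      · rintro ⟨h1, τ, h2, h3, h4⟩; exact ⟨τ, ⟨h1, h2, h3⟩, h4⟩
      · rintro ⟨τ, ⟨h1, h2, h3⟩, h4⟩; exact ⟨h1, τ, h2, h3, h4⟩
    rw [this]
    exact MeasurableSet.iUnion fun τ => MeasurableSet.iUnion fun _ =>
      isClosed_closure.measurableSet
  have heq : (fun y : Y => @decide (goodSeq g y σ) (Classical.propDecidable _)) =
      fun y => @ite _ (goodSeq g y σ) (Classical.propDecidable _) true false := by
    funext y
    by_cases h : goodSeq g y σ
    · rw [if_pos h]
      exact @decide_eq_true _ (Classical.propDecidable _) h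
    · rw [if_neg h]
      exact @decide_eq_false _ (Classical.propDecidable _) h
  rw [heq]
  exact Measurable.ite hset measurable_const measurable_const

/-! ### Analyticity of the family -/

lemma measurable_eval_tree (σ : List ℕ) : Measurable fun T : TreeOmega => T.1 σ :=
  (measurable_pi_apply σ).comp measurable_subtype_coe

lemma analyticSet_mathiasBushFam : AnalyticSet mathiasBushFam := by
  set D : Set (TreeOmega × (ℕ → ℕ)) :=
    {p | StrictMono p.2 ∧ ∀ σ ∈ MB (Set.range p.2), p.1.1 σ = true} with hD
  have hDmeas : MeasurableSet D := by
    have h1 : MeasurableSet {p : TreeOmega × (ℕ → ℕ) | StrictMono p.2} := by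
      have : {p : TreeOmega × (ℕ → ℕ) | StrictMono p.2} =
          ⋂ (a : ℕ), ⋂ (c : ℕ), ⋂ (_ : a < c), {p | p.2 a < p.2 c} := by
        ext p
        simp only [Set.mem_iInter, Set.mem_setOf_eq]
        exact ⟨fun h a c hac => h hac, fun h a c hac => h a c hac⟩
      rw [this]
      refine MeasurableSet.iInter fun a => MeasurableSet.iInter fun c =>
        MeasurableSet.iInter fun _ => ?_
      have : {p : TreeOmega × (ℕ → ℕ) | p.2 a < p.2 c} =
          (fun p : TreeOmega × (ℕ → ℕ) => (p.2 a, p.2 c)) ⁻¹' {q : ℕ × ℕ | q.1 < q.2} := rfl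
      rw [this]
      refine (Set.to_countable _).measurableSet.preimage ?_
      fun_prop
    have h2 : MeasurableSet {p : TreeOmega × (ℕ → ℕ) |
        ∀ σ ∈ MB (Set.range p.2), p.1.1 σ = true} := by
      have : {p : TreeOmega × (ℕ → ℕ) | ∀ σ ∈ MB (Set.range p.2), p.1.1 σ = true} =
          ⋂ σ : List ℕ, {p : TreeOmega × (ℕ → ℕ) |
            ((∀ n ∈ σ, ∃ k, p.2 k = n) ∧ σ.Pairwise (· < ·)) → p.1.1 σ = true} := by
        ext p
        simp only [Set.mem_iInter, Set.mem_setOf_eq, MB, Set.mem_range]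
      rw [this]
      refine MeasurableSet.iInter fun σ => ?_
      have heq : {p : TreeOmega × (ℕ → ℕ) |
            ((∀ n ∈ σ, ∃ k, p.2 k = n) ∧ σ.Pairwise (· < ·)) → p.1.1 σ = true} =
          {p : TreeOmega × (ℕ → ℕ) | (∀ n ∈ σ, ∃ k, p.2 k = n) ∧ σ.Pairwise (· < ·)}ᶜ ∪
            {p | p.1.1 σ = true} := by
        ext p
        simp only [Set.mem_union, Set.mem_compl_iff, Set.mem_setOf_eq]
        tauto
      rw [heq]
      refine MeasurableSet.union (MeasurableSet.compl ?_) ?_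
      · have : {p : TreeOmega × (ℕ → ℕ) | (∀ n ∈ σ, ∃ k, p.2 k = n) ∧ σ.Pairwise (· < ·)} =
            (⋂ n ∈ σ, ⋃ k : ℕ, {p : TreeOmega × (ℕ → ℕ) | p.2 k = n}) ∩
              {p | σ.Pairwise (· < ·)} := by
          ext p
          simp only [Set.mem_inter_iff, Set.mem_iInter, Set.mem_iUnion, Set.mem_setOf_eq]
        rw [this]
        refine MeasurableSet.inter ?_ ?_
        · refine MeasurableSet.biInter (Set.to_countable _) fun n _ =>
            MeasurableSet.iUnion fun k => ?_
          show MeasurableSet ((fun p : TreeOmega × (ℕ → ℕ) => p.2 k) ⁻¹' {n})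
          refine MeasurableSet.preimage (measurableSet_singleton n) ?_
          fun_prop
        · by_cases h : σ.Pairwise (· < ·)
          · have : {p : TreeOmega × (ℕ → ℕ) | σ.Pairwise (· < ·)} = Set.univ := by
              ext p; simp [h]
            rw [this]; exact MeasurableSet.univ
          · have : {p : TreeOmega × (ℕ → ℕ) | σ.Pairwise (· < ·)} = ∅ := by
              ext p; simp [h]
            rw [this]; exact MeasurableSet.empty
      · show MeasurableSet ((fun p : TreeOmega × (ℕ → ℕ) => p.1.1 σ) ⁻¹' {true})
        refine MeasurableSet.preimage (measurableSet_singleton true) ?_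
        exact (measurable_eval_tree σ).comp measurable_fst
    exact h1.inter h2
  have himg : mathiasBushFam = Prod.fst '' D := by
    ext T
    constructor
    · rintro ⟨B, hBinf, hsub⟩
      refine ⟨(T, Nat.nth (· ∈ B)), ⟨Nat.nth_strictMono hBinf, fun σ hσ => ?_⟩, rfl⟩
      refine hsub ⟨fun n hn => ?_, hσ.2⟩
      obtain ⟨k, hk⟩ := hσ.1 n hn
      rw [← hk]
      exact Nat.nth_mem_of_infinite hBinf k
    · rintro ⟨⟨T', s⟩, ⟨hmono, hsub⟩, rfl⟩
      exact ⟨Set.range s, Set.infinite_range_of_injective hmono.injective,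
        fun σ hσ => hsub σ hσ⟩
  rw [himg]
  exact hDmeas.analyticSet_image measurable_fst

/-- The empty tree. -/
def emptyTree : TreeOmega := ⟨fun _ => false, fun _ _ h _ => by simp at h⟩

lemma emptyTree_not_mem : emptyTree ∉ mathiasBushFam := by
  rintro ⟨B, _, hsub⟩
  have : ([] : List ℕ) ∈ MB B := ⟨by simp, List.Pairwise.nil⟩
  simpa [emptyTree] using hsub this

/-- The family of trees containing some `M(B)` is `Σ¹₁`-complete: it is analytic, and
every analytic subset of every Polish space Borel-reduces to it. -/
theorem mathiasBushFam_analytic_complete :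
    AnalyticSet mathiasBushFam ∧
      ∀ (Y : Type) [TopologicalSpace Y] [PolishSpace Y]
        [MeasurableSpace Y] [BorelSpace Y] (B : Set Y),
        AnalyticSet B →
          ∃ f : Y → TreeOmega, Measurable f ∧ f ⁻¹' mathiasBushFam = B := by
  refine ⟨analyticSet_mathiasBushFam, ?_⟩
  intro Y _ _ _ _ B hB
  rw [AnalyticSet] at hB
  rcases hB with rfl | ⟨g, hgcont, hgrange⟩
  · refine ⟨fun _ => emptyTree, measurable_const, ?_⟩
    ext y
    simp [emptyTree_not_mem]
  · refine ⟨redTree g, measurable_redTree g, ?_⟩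
    ext y
    rw [Set.mem_preimage, ← hgrange]
    exact redTree_spec hgcont y
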